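/- Let D be a Hermitian Dirac operator with zero diagonal on n vertices and let i, j be two vertices connected in G_D. Let Π(i,j) ⊆ {1,…,n} be the set of vertices lying on some simple path (no repeated vertex) from i to j in G_D, and let D' be the principal submatrix of D indexed by Π(i,j). Then d^D(i,j) = d^{D'}(i,j), where the right-hand side is the noncommutative distance computed in the submatrix D'. -/

import Mathlib

open scoped ENNReal

/-- The operator norm on square matrices induced by the Euclidean (ℓ²) norm. -/
noncomputable def opNorm {ι : Type*} [Finite ι] (M : Matrix ι ι ℂ) : ℝ :=
  letI := Fintype.ofFinite ι
  letI := Classical.decEq ι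
  ‖Matrix.toEuclideanCLM (𝕜 := ℂ) M‖

/-- The commutator `[D, π(a)]` of a matrix with the diagonal matrix of `a`. -/
noncomputable def commD {ι : Type*} [Finite ι] (D : Matrix ι ι ℂ) (a : ι → ℂ) : Matrix ι ι ℂ :=
  letI := Fintype.ofFinite ι
  letI := Classical.decEq ι
  D * Matrix.diagonal a - Matrix.diagonal a * D

/-- Connes' noncommutative distance associated to the Dirac operator `D`. -/
noncomputable def ncDist {ι : Type*} [Finite ι] (D : Matrix ι ι ℂ) (i j : ι) : ℝ≥0∞ :=
  ⨆ (a : ι → ℂ) (_ : opNorm (commD D a) ≤ 1), ENNReal.ofReal ‖a i - a j‖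

/-- The weight of an edge: the inverse of `|D i j|` (infinite if `D i j = 0`). -/
noncomputable def eWeight {ι : Type*} (D : Matrix ι ι ℂ) (u v : ι) : ℝ≥0∞ :=
  (ENNReal.ofReal ‖D u v‖)⁻¹

/-- Adjacency in the graph `G_D`. -/
def Adjac {ι : Type*} (D : Matrix ι ι ℂ) (u v : ι) : Prop := u ≠ v ∧ D u v ≠ 0

/-- The length of a walk `i :: p` computed with weights `eWeight D`. -/
noncomputable def walkLength {ι : Type*} (D : Matrix ι ι ℂ) : ι → List ι → ℝ≥0∞
  | _, [] => 0
  | u, v :: rest => eWeight D u v + walkLength D v rest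

/-- `i :: p` is a walk from `i` to `j` in the graph `G_D`. -/
def IsWalk {ι : Type*} (D : Matrix ι ι ℂ) (i j : ι) (p : List ι) : Prop :=
  List.Chain (Adjac D) i p ∧ (i :: p).getLast (List.cons_ne_nil _ _) = j

/-- `i` and `j` lie in the same connected component of `G_D`. -/
def Conn {ι : Type*} (D : Matrix ι ι ℂ) (i j : ι) : Prop := ∃ p, IsWalk D i j p

/-- The geodesic (weighted shortest-path) distance on `G_D`. -/
noncomputable def gDist {ι : Type*} (D : Matrix ι ι ℂ) (i j : ι) : ℝ≥0∞ :=
  ⨅ (p : List ι) (_ : IsWalk D i j p), walkLength D i p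


/-- A simple path: a walk with no repeated vertex. -/
def IsSimplePath {ι : Type*} (D : Matrix ι ι ℂ) (i j : ι) (p : List ι) : Prop :=
  IsWalk D i j p ∧ (i :: p).Nodup

/-- `Π(i,j)`: the set of vertices lying on some simple path from `i` to `j`. -/
def simplePathSet {ι : Type*} (D : Matrix ι ι ℂ) (i j : ι) : Set ι :=
  {v | ∃ p, IsSimplePath D i j p ∧ v ∈ i :: p}


set_option linter.unusedSectionVars false
set_option maxHeartbeats 1000000




section NormAux
open Matrix

variable {ι : Type*} [Fintype ι] [DecidableEq ι]

lemma sum_dite_mem {β : Type*} [AddCommMonoid β] (s : Set ι) [Fintype s]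
    [DecidablePred (· ∈ s)] (f : s → β) :
    ∑ m : ι, (if h : m ∈ s then f ⟨m, h⟩ else 0) = ∑ k : s, f k := by
  classical
  calc ∑ m : ι, (if h : m ∈ s then f ⟨m, h⟩ else 0)
      = ∑ m ∈ s.toFinset, (if h : m ∈ s then f ⟨m, h⟩ else 0) :=
        (Finset.sum_subset (Finset.subset_univ _)
          (by intro x _ hx; rw [dif_neg]; simpa using hx)).symm
    _ = ∑ k : s, (if h : (k : ι) ∈ s then f ⟨k, h⟩ else 0) :=
        Finset.sum_subtype _ (by simp) _
    _ = ∑ k : s, f k := by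
        refine Finset.sum_congr rfl fun k _ => ?_
        rw [dif_pos k.2]

lemma norm_clm_symm_apply (M : Matrix ι ι ℂ) (v : ι → ℂ) :
    ‖Matrix.toEuclideanCLM (𝕜 := ℂ) M ((WithLp.equiv 2 (ι → ℂ)).symm v)‖
      = Real.sqrt (∑ m, ‖(M *ᵥ v) m‖ ^ 2) := by
  rw [show (WithLp.equiv 2 (ι → ℂ)).symm v = WithLp.toLp 2 v from rfl, Matrix.toEuclideanCLM_toLp]
  rw [EuclideanSpace.norm_eq]

lemma opnorm_submatrix_le (s : Set ι) [Fintype s] [DecidableEq s] [DecidablePred (· ∈ s)]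
    (M : Matrix ι ι ℂ) :
    ‖Matrix.toEuclideanCLM (𝕜 := ℂ) (M.submatrix (Subtype.val : s → ι) Subtype.val)‖
      ≤ ‖Matrix.toEuclideanCLM (𝕜 := ℂ) M‖ := by
  refine ContinuousLinearMap.opNorm_le_bound _ (norm_nonneg _) fun x => ?_
  set M' := M.submatrix (Subtype.val : s → ι) Subtype.val with hM'
  set v : s → ℂ := WithLp.equiv 2 _ x with hv
  have hx : x = (WithLp.equiv 2 (s → ℂ)).symm v := by simp [hv]
  set y : ι → ℂ := fun m => if h : m ∈ s then v ⟨m, h⟩ else 0 with hy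
  have hnorms : ∑ m : ι, ‖y m‖ ^ 2 = ∑ k : s, ‖v k‖ ^ 2 := by
    rw [← sum_dite_mem s (fun k : s => ‖v k‖ ^ 2)]
    refine Finset.sum_congr rfl fun m _ => ?_
    by_cases h : m ∈ s
    · simp only [hy, dif_pos h]
    · simp only [hy, dif_neg h, norm_zero]
      simp
  have hny : ‖(WithLp.equiv 2 (ι → ℂ)).symm y‖ = ‖x‖ := by
    rw [hx, EuclideanSpace.norm_eq, EuclideanSpace.norm_eq]
    congr 1
  have hmv : ∀ k : s, (M *ᵥ y) (k : ι) = (M' *ᵥ v) k := by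
    intro k
    show ∑ m : ι, M (k : ι) m * y m = ∑ l : s, M' k l * v l
    simp only [hM', Matrix.submatrix_apply]
    rw [← sum_dite_mem s (fun l : s => M (k : ι) (l : ι) * v l)]
    refine Finset.sum_congr rfl fun m _ => ?_
    by_cases h : m ∈ s
    · simp only [hy, dif_pos h]
    · simp only [hy, dif_neg h, mul_zero]
  have h1 : ∑ k : s, ‖(M' *ᵥ v) k‖ ^ 2 ≤ ∑ m : ι, ‖(M *ᵥ y) m‖ ^ 2 := by
    rw [← sum_dite_mem s (fun k : s => ‖(M' *ᵥ v) k‖ ^ 2)]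
    refine Finset.sum_le_sum fun m _ => ?_
    by_cases h : m ∈ s
    · rw [dif_pos h, ← hmv ⟨m, h⟩]
    · rw [dif_neg h]
      positivity
  calc ‖Matrix.toEuclideanCLM (𝕜 := ℂ) M' x‖
      = Real.sqrt (∑ k : s, ‖(M' *ᵥ v) k‖ ^ 2) := by rw [hx, norm_clm_symm_apply]
    _ ≤ Real.sqrt (∑ m : ι, ‖(M *ᵥ y) m‖ ^ 2) := Real.sqrt_le_sqrt h1
    _ = ‖Matrix.toEuclideanCLM (𝕜 := ℂ) M ((WithLp.equiv 2 (ι → ℂ)).symm y)‖ :=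
        (norm_clm_symm_apply M y).symm
    _ ≤ ‖Matrix.toEuclideanCLM (𝕜 := ℂ) M‖ * ‖(WithLp.equiv 2 (ι → ℂ)).symm y‖ :=
        ContinuousLinearMap.le_opNorm _ _
    _ = ‖Matrix.toEuclideanCLM (𝕜 := ℂ) M‖ * ‖x‖ := by rw [hny]

lemma opnorm_le_submatrix (s : Set ι) [Fintype s] [DecidableEq s] [DecidablePred (· ∈ s)]
    (M : Matrix ι ι ℂ) (hsupp : ∀ u v : ι, (u ∉ s ∨ v ∉ s) → M u v = 0) :
    ‖Matrix.toEuclideanCLM (𝕜 := ℂ) M‖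
      ≤ ‖Matrix.toEuclideanCLM (𝕜 := ℂ) (M.submatrix (Subtype.val : s → ι) Subtype.val)‖ := by
  refine ContinuousLinearMap.opNorm_le_bound _ (norm_nonneg _) fun z => ?_
  set M' := M.submatrix (Subtype.val : s → ι) Subtype.val with hM'
  set w : ι → ℂ := WithLp.equiv 2 _ z with hw
  have hz : z = (WithLp.equiv 2 (ι → ℂ)).symm w := by simp [hw]
  set v : s → ℂ := fun k => w (k : ι) with hv
  have hmv : ∀ k : s, (M *ᵥ w) (k : ι) = (M' *ᵥ v) k := by
    intro k
    show ∑ m : ι, M (k : ι) m * w m = ∑ l : s, M' k l * v l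
    simp only [hM', Matrix.submatrix_apply]
    rw [← sum_dite_mem s (fun l : s => M (k : ι) (l : ι) * v l)]
    refine Finset.sum_congr rfl fun m _ => ?_
    by_cases h : m ∈ s
    · simp only [hv, dif_pos h]
    · rw [dif_neg h, hsupp _ _ (Or.inr h), zero_mul]
  have hzero : ∀ m : ι, m ∉ s → (M *ᵥ w) m = 0 := by
    intro m hm
    show ∑ l : ι, M m l * w l = 0
    refine Finset.sum_eq_zero fun l _ => ?_
    rw [hsupp _ _ (Or.inl hm), zero_mul]
  have h1 : ∑ m : ι, ‖(M *ᵥ w) m‖ ^ 2 = ∑ k : s, ‖(M' *ᵥ v) k‖ ^ 2 := by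
    rw [← sum_dite_mem s (fun k : s => ‖(M' *ᵥ v) k‖ ^ 2)]
    refine Finset.sum_congr rfl fun m _ => ?_
    by_cases h : m ∈ s
    · rw [dif_pos h, ← hmv ⟨m, h⟩]
    · rw [dif_neg h, hzero m h, norm_zero]
      simp
  have h2 : ∑ k : s, ‖v k‖ ^ 2 ≤ ∑ m : ι, ‖w m‖ ^ 2 := by
    rw [← sum_dite_mem s (fun k : s => ‖v k‖ ^ 2)]
    refine Finset.sum_le_sum fun m _ => ?_
    by_cases h : m ∈ s
    · rw [dif_pos h]
    · rw [dif_neg h]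
      positivity
  have hnv : ‖(WithLp.equiv 2 (s → ℂ)).symm v‖ ≤ ‖z‖ := by
    rw [hz, EuclideanSpace.norm_eq, EuclideanSpace.norm_eq]
    exact Real.sqrt_le_sqrt h2
  calc ‖Matrix.toEuclideanCLM (𝕜 := ℂ) M z‖
      = Real.sqrt (∑ m : ι, ‖(M *ᵥ w) m‖ ^ 2) := by rw [hz, norm_clm_symm_apply]
    _ = Real.sqrt (∑ k : s, ‖(M' *ᵥ v) k‖ ^ 2) := by rw [h1]
    _ = ‖Matrix.toEuclideanCLM (𝕜 := ℂ) M' ((WithLp.equiv 2 (s → ℂ)).symm v)‖ :=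
        (norm_clm_symm_apply M' v).symm
    _ ≤ ‖Matrix.toEuclideanCLM (𝕜 := ℂ) M'‖ * ‖(WithLp.equiv 2 (s → ℂ)).symm v‖ :=
        ContinuousLinearMap.le_opNorm _ _
    _ ≤ ‖Matrix.toEuclideanCLM (𝕜 := ℂ) M'‖ * ‖z‖ := by
        exact mul_le_mul_of_nonneg_left hnv (norm_nonneg _)

end NormAux






namespace NCAux
open SimpleGraph SimpleGraph.Walk

variable {V : Type*} {G : SimpleGraph V}

lemma getLast_congr' {α : Type*} {l l' : List α} (h : l = l') (h1 : l ≠ []) :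
    l.getLast h1 = l'.getLast (h ▸ h1) := by subst h; rfl

lemma isPath_append_of {u v w : V} {p : G.Walk u v} {q : G.Walk v w}
    (hp : p.IsPath) (hq : q.IsPath) (h : ∀ x ∈ p.support, x ∈ q.support → x = v) :
    (p.append q).IsPath := by
  rw [isPath_def, support_append]
  refine List.Nodup.append (isPath_def _ |>.1 hp) ?_ ?_
  · have := (isPath_def _).1 hq
    rw [support_eq_cons] at this
    exact this.of_cons
  · intro x hxp hxq
    have hx : x ∈ q.support := List.mem_of_mem_tail hxq
    have := h x hxp hx
    subst this
    have := (isPath_def _).1 hq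
    rw [support_eq_cons] at this
    exact (List.nodup_cons.1 this).1 hxq

lemma eq_of_mem_support_append {u v w : V} {p : G.Walk u v} {q : G.Walk v w}
    (h : (p.append q).IsPath) {x : V} (hp : x ∈ p.support) (hq : x ∈ q.support) : x = v := by
  rw [isPath_def, support_append] at h
  have hd := List.disjoint_of_nodup_append h
  rw [support_eq_cons] at hq
  rcases List.mem_cons.1 hq with hq | hq
  · exact hq
  · exact absurd hq (hd hp)

lemma glue3 {i a b j : V} {A : G.Walk i a} {B : G.Walk a b} {C : G.Walk b j}
    (hA : A.IsPath) (hB : B.IsPath) (hC : C.IsPath)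
    (hAB : ∀ x ∈ A.support, x ∈ B.support → x = a)
    (hBC : ∀ x ∈ B.support, x ∈ C.support → x = b)
    (hAC : ∀ x ∈ A.support, x ∈ C.support → False) :
    ((A.append B).append C).IsPath := by
  refine isPath_append_of (isPath_append_of hA hB hAB) hC ?_
  intro x hx hxC
  rcases (mem_support_append_iff _ _).1 hx with hx | hx
  · exact absurd hxC (fun h => hAC x hx h)
  · exact hBC x hx hxC

lemma glue4 {i a b c j : V} {A : G.Walk i a} {B : G.Walk a b} {C : G.Walk b c} {E : G.Walk c j}
    (hA : A.IsPath) (hB : B.IsPath) (hC : C.IsPath) (hE : E.IsPath)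
    (hAB : ∀ x ∈ A.support, x ∈ B.support → x = a)
    (hBC : ∀ x ∈ B.support, x ∈ C.support → x = b)
    (hCE : ∀ x ∈ C.support, x ∈ E.support → x = c)
    (hAC : ∀ x ∈ A.support, x ∈ C.support → False)
    (hAE : ∀ x ∈ A.support, x ∈ E.support → False)
    (hBE : ∀ x ∈ B.support, x ∈ E.support → False) :
    (((A.append B).append C).append E).IsPath := by
  refine isPath_append_of (glue3 hA hB hC hAB hBC hAC) hE ?_
  intro x hx hxE
  rcases (mem_support_append_iff _ _).1 hx with hx | hx
  · rcases (mem_support_append_iff _ _).1 hx with hx | hx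
    · exact absurd hxE (fun h => hAE x hx h)
    · exact absurd hxE (fun h => hBE x hx h)
  · exact hCE x hx hxE

lemma exists_first_split (T : Set V) {a b : V} (w : G.Walk a b) (hb : b ∈ T) :
    ∃ (z : V) (w1 : G.Walk a z) (w2 : G.Walk z b), z ∈ T ∧ w = w1.append w2 ∧
      ∀ v ∈ w1.support, v ∈ T → v = z := by
  induction w with
  | nil => exact ⟨_, Walk.nil, Walk.nil, hb, rfl, by intro v hv _; simpa using hv⟩
  | @cons u x b h q ih =>
    by_cases hu : u ∈ T
    · exact ⟨u, Walk.nil, Walk.cons h q, hu, rfl, by simp⟩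
    · obtain ⟨z, w1, w2, hz, heq, hmin⟩ := ih hb
      refine ⟨z, Walk.cons h w1, w2, hz, by rw [heq, Walk.cons_append], ?_⟩
      intro v hv hvT
      rcases List.mem_cons.1 (by rwa [support_cons] at hv) with hv' | hv'
      · exact absurd (hv' ▸ hvT) hu
      · exact hmin v hv' hvT

lemma edge_of_support_pair {V : Type*} {G : SimpleGraph V} {c c' : V} (P : G.Walk c c')
    (hne : c ≠ c') (hall : ∀ v ∈ P.support, v = c ∨ v = c') : s(c, c') ∈ P.edges := by
  cases P with
  | nil => exact absurd rfl hne
  | @cons _ v _ h q =>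
    have hv : v = c ∨ v = c' := hall v (by
      rw [SimpleGraph.Walk.support_cons]
      exact List.mem_cons_of_mem _ q.start_mem_support)
    have hvc : v ≠ c := by rintro rfl; exact G.loopless.irrefl _ h
    have hv' : v = c' := hv.resolve_left hvc
    subst hv'
    rw [SimpleGraph.Walk.edges_cons]
    exact List.mem_cons_self

end NCAux

namespace NCAux2
open SimpleGraph SimpleGraph.Walk NCAux

variable {V : Type*} {G : SimpleGraph V}

lemma lem1 [DecidableEq V] (s : Set V) {i j c c' : V} (Q : G.Walk i j) (hQ : Q.IsPath)
    (hall : ∀ v ∈ Q.support, v ∈ s) (hc : c ∈ Q.support) (hc' : c' ∈ Q.support)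
    (hne : c ≠ c') (E : G.Walk c c') (hE : E.IsPath)
    (hint : ∀ v ∈ E.support, v = c ∨ v = c' ∨ v ∉ s) :
    ∃ W : G.Walk i j, W.IsPath ∧ ∀ v ∈ E.support, v ∈ W.support := by
  set A := Q.takeUntil c hc with hAdef
  set Dr := Q.dropUntil c hc with hDrdef
  have hQspec : A.append Dr = Q := Q.take_spec hc
  have hQ2 : (A.append Dr).IsPath := by rw [hQspec]; exact hQ
  have hA : A.IsPath := hQ.takeUntil hc
  have hDr : Dr.IsPath := hQ.dropUntil hc
  have hsplit : ∀ v, v ∈ A.support → v ∈ Dr.support → v = c :=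
    fun v hv hv' => eq_of_mem_support_append hQ2 hv hv'
  have hallA : ∀ v ∈ A.support, v ∈ s := fun v hv => hall v (Q.support_takeUntil_subset hc hv)
  have hallDr : ∀ v ∈ Dr.support, v ∈ s := fun v hv => hall v (Q.support_dropUntil_subset hc hv)
  by_cases hd : c' ∈ Dr.support
  · set C := Dr.dropUntil c' hd with hCdef
    have hDrspec : (Dr.takeUntil c' hd).append C = Dr := Dr.take_spec hd
    have hDr2 : ((Dr.takeUntil c' hd).append C).IsPath := by rw [hDrspec]; exact hDr
    have hC : C.IsPath := hDr.dropUntil hd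
    have hcC : c ∉ C.support := by
      intro hcc
      exact hne (eq_of_mem_support_append hDr2 (Dr.takeUntil c' hd).start_mem_support hcc)
    have hc'A : c' ∉ A.support := fun h => hne.symm (hsplit c' h hd)
    have hallC : ∀ v ∈ C.support, v ∈ s := fun v hv => hallDr v (Dr.support_dropUntil_subset hd hv)
    have h1 : ∀ x ∈ A.support, x ∈ E.support → x = c := by
      intro x hxA hxE
      rcases hint x hxE with h | h | h
      · exact h
      · subst h; exact absurd hxA hc'A
      · exact absurd (hallA x hxA) h
    have h2 : ∀ x ∈ E.support, x ∈ C.support → x = c' := by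
      intro x hxE hxC
      rcases hint x hxE with h | h | h
      · subst h; exact absurd hxC hcC
      · exact h
      · exact absurd (hallC x hxC) h
    have h3 : ∀ x ∈ A.support, x ∈ C.support → False := by
      intro x hxA hxC
      have hx := hsplit x hxA (Dr.support_dropUntil_subset hd hxC)
      subst hx
      exact hcC hxC
    refine ⟨(A.append E).append C, glue3 hA hE hC h1 h2 h3, ?_⟩
    intro v hv
    rw [mem_support_append_iff, mem_support_append_iff]
    exact Or.inl (Or.inr hv)
  · have hc'A : c' ∈ A.support := by
      rcases (mem_support_append_iff A Dr).1 (by rw [hQspec]; exact hc') with h | h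
      · exact h
      · exact absurd h hd
    set A1 := A.takeUntil c' hc'A with hA1def
    have hAspec : A1.append (A.dropUntil c' hc'A) = A := A.take_spec hc'A
    have hA2 : (A1.append (A.dropUntil c' hc'A)).IsPath := by rw [hAspec]; exact hA
    have hA1 : A1.IsPath := hA.takeUntil hc'A
    have hcA1 : c ∉ A1.support := by
      intro hcc
      exact hne.symm ((eq_of_mem_support_append hA2 hcc
        (A.dropUntil c' hc'A).end_mem_support).symm)
    have hallA1 : ∀ v ∈ A1.support, v ∈ s :=
      fun v hv => hallA v (A.support_takeUntil_subset hc'A hv)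
    have hErev : E.reverse.IsPath := hE.reverse
    have hmemErev : ∀ x : V, x ∈ E.reverse.support ↔ x ∈ E.support := fun x => by
      rw [support_reverse, List.mem_reverse]
    have h1 : ∀ x ∈ A1.support, x ∈ E.reverse.support → x = c' := by
      intro x hxA hxE
      rcases hint x ((hmemErev x).1 hxE) with h | h | h
      · subst h; exact absurd hxA hcA1
      · exact h
      · exact absurd (hallA1 x hxA) h
    have h2 : ∀ x ∈ E.reverse.support, x ∈ Dr.support → x = c := by
      intro x hxE hxD
      rcases hint x ((hmemErev x).1 hxE) with h | h | h
      · exact h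
      · subst h; exact absurd hxD hd
      · exact absurd (hallDr x hxD) h
    have h3 : ∀ x ∈ A1.support, x ∈ Dr.support → False := by
      intro x hxA hxD
      have hx := hsplit x (A.support_takeUntil_subset hc'A hxA) hxD
      subst hx
      exact hcA1 hxA
    refine ⟨(A1.append E.reverse).append Dr, glue3 hA1 hErev hDr h1 h2 h3, ?_⟩
    intro v hv
    rw [mem_support_append_iff, mem_support_append_iff]
    exact Or.inl (Or.inr ((hmemErev v).2 hv))

end NCAux2
namespace NCAux2
open SimpleGraph SimpleGraph.Walk NCAux

variable {V : Type*} {G : SimpleGraph V}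

lemma lem2 [DecidableEq V] (s : Set V) {i j c c' : V} (Q Q' : G.Walk i j)
    (hQ : Q.IsPath) (hQ' : Q'.IsPath)
    (hall : ∀ v ∈ Q.support, v ∈ s) (hall' : ∀ v ∈ Q'.support, v ∈ s)
    (hc : c ∈ Q.support) (hc' : c' ∈ Q'.support)
    (hc'Q : c' ∉ Q.support) (hcQ' : c ∉ Q'.support)
    (E : G.Walk c c') (hE : E.IsPath)
    (hint : ∀ v ∈ E.support, v = c ∨ v = c' ∨ v ∉ s) :
    ∃ W : G.Walk i j, W.IsPath ∧ ∀ v ∈ E.support, v ∈ W.support := by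
  have hne : c ≠ c' := fun h => hcQ' (h ▸ hc')
  set A := Q.takeUntil c hc with hAdef
  set Dr := Q.dropUntil c hc with hDrdef
  have hQspec : A.append Dr = Q := Q.take_spec hc
  have hQ2 : (A.append Dr).IsPath := by rw [hQspec]; exact hQ
  have hA : A.IsPath := hQ.takeUntil hc
  have hDr : Dr.IsPath := hQ.dropUntil hc
  have hsplit : ∀ v, v ∈ A.support → v ∈ Dr.support → v = c :=
    fun v hv hv' => eq_of_mem_support_append hQ2 hv hv'
  have hallA : ∀ v ∈ A.support, v ∈ s := fun v hv => hall v (Q.support_takeUntil_subset hc hv)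
  have hallDr : ∀ v ∈ Dr.support, v ∈ s := fun v hv => hall v (Q.support_dropUntil_subset hc hv)
  have hsubA : ∀ v ∈ A.support, v ∈ Q.support := fun v hv => Q.support_takeUntil_subset hc hv
  have hsubDr : ∀ v ∈ Dr.support, v ∈ Q.support := fun v hv => Q.support_dropUntil_subset hc hv
  set S0 := Q'.dropUntil c' hc' with hS0def
  have hS0path : S0.IsPath := hQ'.dropUntil hc'
  have hS0sub : ∀ v ∈ S0.support, v ∈ Q'.support := fun v hv => Q'.support_dropUntil_subset hc' hv
  obtain ⟨z, S1, S2, hzQ, heq, hmin⟩ :=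
    exists_first_split {v | v ∈ Q.support} S0 Q.end_mem_support
  have hS1path : S1.IsPath := by
    have h0 := hS0path; rw [heq] at h0; exact h0.of_append_left
  have hS1sub : ∀ v ∈ S1.support, v ∈ Q'.support := by
    intro v hv
    apply hS0sub
    rw [heq, mem_support_append_iff]; exact Or.inl hv
  have hzs : z ∈ Q.support := hzQ
  have hznec : z ≠ c := fun h => hcQ' (h ▸ hS1sub z S1.end_mem_support)
  have hznec' : z ≠ c' := fun h => hc'Q (h ▸ hzs)
  have hcS1 : c ∉ S1.support := fun h => hcQ' (hS1sub c h)
  have hc'Dr : c' ∉ Dr.support := fun h => hc'Q (hsubDr c' h)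
  have hc'A : c' ∉ A.support := fun h => hc'Q (hsubA c' h)
  have hallS1 : ∀ v ∈ S1.support, v ∈ s := fun v hv => hall' v (hS1sub v hv)
  by_cases hzd : z ∈ Dr.support
  · set Dz := Dr.dropUntil z hzd with hDzdef
    have hDrspec : (Dr.takeUntil z hzd).append Dz = Dr := Dr.take_spec hzd
    have hDr2 : ((Dr.takeUntil z hzd).append Dz).IsPath := by rw [hDrspec]; exact hDr
    have hDz : Dz.IsPath := hDr.dropUntil hzd
    have hDzsub : ∀ v ∈ Dz.support, v ∈ Dr.support :=
      fun v hv => Dr.support_dropUntil_subset hzd hv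
    have hcDz : c ∉ Dz.support := by
      intro hcc
      exact hznec.symm
        (eq_of_mem_support_append hDr2 (Dr.takeUntil z hzd).start_mem_support hcc)
    have hc'Dz : c' ∉ Dz.support := fun h => hc'Dr (hDzsub c' h)
    have hAE : ∀ x ∈ A.support, x ∈ E.support → x = c := by
      intro x hxA hxE
      rcases hint x hxE with h | h | h
      · exact h
      · subst h; exact absurd hxA hc'A
      · exact absurd (hallA x hxA) h
    have hES1 : ∀ x ∈ E.support, x ∈ S1.support → x = c' := by
      intro x hxE hxS
      rcases hint x hxE with h | h | h
      · subst h; exact absurd hxS hcS1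
      · exact h
      · exact absurd (hallS1 x hxS) h
    have hS1Dz : ∀ x ∈ S1.support, x ∈ Dz.support → x = z := by
      intro x hxS hxD
      exact hmin x hxS (hsubDr x (hDzsub x hxD))
    have hAS1 : ∀ x ∈ A.support, x ∈ S1.support → False := by
      intro x hxA hxS
      have hx : x = z := hmin x hxS (hsubA x hxA)
      subst hx
      exact hznec (hsplit x hxA hzd)
    have hADz : ∀ x ∈ A.support, x ∈ Dz.support → False := by
      intro x hxA hxD
      have hx : x = c := hsplit x hxA (hDzsub x hxD)
      subst hx
      exact hcDz hxD
    have hEDz : ∀ x ∈ E.support, x ∈ Dz.support → False := by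
      intro x hxE hxD
      rcases hint x hxE with h | h | h
      · subst h; exact hcDz hxD
      · subst h; exact hc'Dz hxD
      · exact h (hallDr x (hDzsub x hxD))
    refine ⟨((A.append E).append S1).append Dz,
      glue4 hA hE hS1path hDz hAE hES1 hS1Dz hAS1 hADz hEDz, ?_⟩
    intro v hv
    simp only [mem_support_append_iff]
    exact Or.inl (Or.inl (Or.inr hv))
  · have hzA : z ∈ A.support := by
      rcases (mem_support_append_iff A Dr).1 (by rw [hQspec]; exact hzs) with h | h
      · exact h
      · exact absurd h hzd
    set A1 := A.takeUntil z hzA with hA1def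
    have hAspec : A1.append (A.dropUntil z hzA) = A := A.take_spec hzA
    have hA2 : (A1.append (A.dropUntil z hzA)).IsPath := by rw [hAspec]; exact hA
    have hA1 : A1.IsPath := hA.takeUntil hzA
    have hA1sub : ∀ v ∈ A1.support, v ∈ A.support :=
      fun v hv => A.support_takeUntil_subset hzA hv
    have hcA1 : c ∉ A1.support := by
      intro hcc
      exact hznec ((eq_of_mem_support_append hA2 hcc
        (A.dropUntil z hzA).end_mem_support).symm)
    have hS1r : S1.reverse.IsPath := hS1path.reverse
    have hmemS1r : ∀ x : V, x ∈ S1.reverse.support ↔ x ∈ S1.support := fun x => by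
      rw [support_reverse, List.mem_reverse]
    have hEr : E.reverse.IsPath := hE.reverse
    have hmemEr : ∀ x : V, x ∈ E.reverse.support ↔ x ∈ E.support := fun x => by
      rw [support_reverse, List.mem_reverse]
    have h1 : ∀ x ∈ A1.support, x ∈ S1.reverse.support → x = z := by
      intro x hxA hxS
      exact hmin x ((hmemS1r x).1 hxS) (hsubA x (hA1sub x hxA))
    have h2 : ∀ x ∈ S1.reverse.support, x ∈ E.reverse.support → x = c' := by
      intro x hxS hxE
      rcases hint x ((hmemEr x).1 hxE) with h | h | h
      · subst h; exact absurd ((hmemS1r x).1 hxS) hcS1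
      · exact h
      · exact absurd (hallS1 x ((hmemS1r x).1 hxS)) h
    have h3 : ∀ x ∈ E.reverse.support, x ∈ Dr.support → x = c := by
      intro x hxE hxD
      rcases hint x ((hmemEr x).1 hxE) with h | h | h
      · exact h
      · subst h; exact absurd hxD hc'Dr
      · exact absurd (hallDr x hxD) h
    have h4 : ∀ x ∈ A1.support, x ∈ E.reverse.support → False := by
      intro x hxA hxE
      rcases hint x ((hmemEr x).1 hxE) with h | h | h
      · subst h; exact hcA1 hxA
      · subst h; exact hc'A (hA1sub x hxA)
      · exact h (hallA x (hA1sub x hxA))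
    have h5 : ∀ x ∈ A1.support, x ∈ Dr.support → False := by
      intro x hxA hxD
      have hx : x = c := hsplit x (hA1sub x hxA) hxD
      subst hx
      exact hcA1 hxA
    have h6 : ∀ x ∈ S1.reverse.support, x ∈ Dr.support → False := by
      intro x hxS hxD
      have hx : x = z := hmin x ((hmemS1r x).1 hxS) (hsubDr x hxD)
      subst hx
      exact hzd hxD
    refine ⟨((A1.append S1.reverse).append E.reverse).append Dr,
      glue4 hA1 hS1r hEr hDr h1 h2 h3 h4 h5 h6, ?_⟩
    intro v hv
    simp only [mem_support_append_iff]
    exact Or.inl (Or.inr ((hmemEr v).2 hv))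

end NCAux2

namespace NCAux3
open SimpleGraph SimpleGraph.Walk NCAux NCAux2

variable {n : ℕ}

/-- The graph `G_D` as a `SimpleGraph`. -/
def GD (D : Matrix (Fin n) (Fin n) ℂ) (hherm : D.IsHermitian) : SimpleGraph (Fin n) where
  Adj u v := u ≠ v ∧ D u v ≠ 0
  symm := ⟨by
    rintro u v ⟨h1, h2⟩
    refine ⟨h1.symm, fun h0 => h2 ?_⟩
    have h3 : D u v = star (D v u) := by
      conv_lhs => rw [← hherm]
      rfl
    rw [h3, h0, star_zero]⟩
  loopless := ⟨fun v h => h.1 rfl⟩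

variable {D : Matrix (Fin n) (Fin n) ℂ} {hherm : D.IsHermitian}

lemma adjac_iff {u v : Fin n} : Adjac D u v ↔ (GD D hherm).Adj u v := Iff.rfl

lemma exists_walk_of_isWalk {i j : Fin n} {p : List (Fin n)} (h : IsWalk D i j p) :
    ∃ w : (GD D hherm).Walk i j, w.support = i :: p := by
  induction p generalizing i with
  | nil =>
    have : i = j := h.2
    subst this
    exact ⟨Walk.nil, rfl⟩
  | cons v rest ih =>
    obtain ⟨hchain, hlast⟩ := h
    rw [List.Chain, List.chain_cons] at hchain
    have hlast' : ((v :: rest).getLast (List.cons_ne_nil _ _)) = j := by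
      rw [← hlast]
      exact (List.getLast_cons _).symm
    obtain ⟨w, hw⟩ := ih ⟨hchain.2, hlast'⟩
    exact ⟨Walk.cons (adjac_iff.1 hchain.1) w, by rw [support_cons, hw]⟩

lemma isWalk_of_walk {i j : Fin n} (w : (GD D hherm).Walk i j) :
    IsWalk D i j w.support.tail := by
  constructor
  · have h := w.isChain_adj_support
    rw [w.support_eq_cons] at h
    exact h
  · have h2 := w.getLast_support
    rw [getLast_congr' (w.support_eq_cons).symm (List.cons_ne_nil _ _)]
    exact h2

lemma mem_sps_iff {i j v : Fin n} :
    v ∈ simplePathSet D i j ↔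
      ∃ w : (GD D hherm).Walk i j, w.IsPath ∧ v ∈ w.support := by
  constructor
  · rintro ⟨p, ⟨hwalk, hnodup⟩, hv⟩
    obtain ⟨w, hw⟩ := exists_walk_of_isWalk (hherm := hherm) hwalk
    exact ⟨w, by rw [isPath_def, hw]; exact hnodup, by rw [hw]; exact hv⟩
  · rintro ⟨w, hw, hv⟩
    refine ⟨w.support.tail, ⟨isWalk_of_walk w, ?_⟩, ?_⟩
    · rw [← w.support_eq_cons]
      exact (isPath_def _).1 hw
    · rw [← w.support_eq_cons]
      exact hv

/-- The main structural lemma. -/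
lemma ml {i j c c' : Fin n} (P : (GD D hherm).Walk c c') (hP : P.IsPath)
    (hc : c ∈ simplePathSet D i j) (hc' : c' ∈ simplePathSet D i j)
    (hint : ∀ v ∈ P.support, v = c ∨ v = c' ∨ v ∉ simplePathSet D i j)
    {x : Fin n} (hx : x ∈ P.support) (hxs : x ∉ simplePathSet D i j) : False := by
  classical
  set s := simplePathSet D i j with hsdef
  have hne : c ≠ c' := by
    rintro rfl
    rw [isPath_iff_eq_nil] at hP
    subst hP
    simp only [support_nil, List.mem_singleton] at hx
    subst hx
    exact hxs hc
  obtain ⟨Pc, hPc, hcPc⟩ := (mem_sps_iff (hherm := hherm)).1 hc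
  obtain ⟨Pc', hPc', hc'Pc'⟩ := (mem_sps_iff (hherm := hherm)).1 hc'
  have hallc : ∀ v ∈ Pc.support, v ∈ s := fun v hv => mem_sps_iff.2 ⟨Pc, hPc, hv⟩
  have hallc' : ∀ v ∈ Pc'.support, v ∈ s := fun v hv => mem_sps_iff.2 ⟨Pc', hPc', hv⟩
  by_cases h1 : c' ∈ Pc.support
  · obtain ⟨W, hW, hsub⟩ := lem1 s Pc hPc hallc hcPc h1 hne P hP hint
    exact hxs (mem_sps_iff.2 ⟨W, hW, hsub x hx⟩)
  by_cases h2 : c ∈ Pc'.support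
  · obtain ⟨W, hW, hsub⟩ := lem1 s Pc' hPc' hallc' hc'Pc' h2 hne.symm P.reverse hP.reverse
      (by
        intro v hv
        rw [support_reverse, List.mem_reverse] at hv
        rcases hint v hv with h | h | h
        · exact Or.inr (Or.inl h)
        · exact Or.inl h
        · exact Or.inr (Or.inr h))
    refine hxs (mem_sps_iff.2 ⟨W, hW, hsub x ?_⟩)
    rw [support_reverse, List.mem_reverse]
    exact hx
  · obtain ⟨W, hW, hsub⟩ := lem2 s Pc Pc' hPc hPc' hallc hallc' hcPc hc'Pc' h1 h2 P hP hint
    exact hxs (mem_sps_iff.2 ⟨W, hW, hsub x hx⟩)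

/-- Reachability from `u` to `c` touching `s` only at the end. -/
def Reach (D : Matrix (Fin n) (Fin n) ℂ) (hherm : D.IsHermitian) (s : Set (Fin n))
    (u c : Fin n) : Prop :=
  ∃ w : (GD D hherm).Walk u c, ∀ v ∈ w.support, v ∈ s → v = c

lemma kl {i j u c c' : Fin n} (hc : c ∈ simplePathSet D i j) (hc' : c' ∈ simplePathSet D i j)
    (h1 : Reach D hherm (simplePathSet D i j) u c)
    (h2 : Reach D hherm (simplePathSet D i j) u c') : c = c' := by
  classical
  by_contra hne
  set s := simplePathSet D i j with hsdef
  obtain ⟨w1, hw1⟩ := h1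
  obtain ⟨w2, hw2⟩ := h2
  have hc'w1 : c' ∉ w1.support := fun h => hne (hw1 c' h hc').symm
  have hcw2 : c ∉ w2.support := fun h => hne (hw2 c h hc)
  set W := w1.reverse.append w2 with hWdef
  have hPpath : W.bypass.IsPath := W.bypass_isPath
  have hPsub : ∀ v ∈ W.bypass.support, v ∈ W.support := fun v hv => W.support_bypass_subset hv
  have hWmem : ∀ v ∈ W.support, v ∈ w1.support ∨ v ∈ w2.support := by
    intro v hv
    rcases (mem_support_append_iff _ _).1 hv with h | h
    · left; rwa [support_reverse, List.mem_reverse] at h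
    · right; exact h
  have hint : ∀ v ∈ W.bypass.support, v = c ∨ v = c' ∨ v ∉ s := by
    intro v hv
    by_cases hvs : v ∈ s
    · rcases hWmem v (hPsub v hv) with h | h
      · exact Or.inl (hw1 v h hvs)
      · exact Or.inr (Or.inl (hw2 v h hvs))
    · exact Or.inr (Or.inr hvs)
  by_cases hex : ∃ x ∈ W.bypass.support, x ∉ s
  · obtain ⟨x, hx, hxs⟩ := hex
    exact ml W.bypass hPpath hc hc' hint hx hxs
  · push_neg at hex
    have hall : ∀ v ∈ W.bypass.support, v = c ∨ v = c' := by
      intro v hv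
      rcases hint v hv with h | h | h
      · exact Or.inl h
      · exact Or.inr h
      · exact absurd (hex v hv) h
    have hedge : s(c, c') ∈ W.bypass.edges := edge_of_support_pair W.bypass hne hall
    have hedgeW : s(c, c') ∈ W.edges := W.edges_bypass_subset hedge
    rw [hWdef, edges_append, List.mem_append] at hedgeW
    rcases hedgeW with h | h
    · rw [edges_reverse, List.mem_reverse] at h
      exact hc'w1 (w1.snd_mem_support_of_mem_edges h)
    · exact hcw2 (w2.fst_mem_support_of_mem_edges h)




lemma reach_single {s : Set (Fin n)} {u v : Fin n} (hu : u ∉ s)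
    (h : (GD D hherm).Adj u v) : Reach D hherm s u v := by
  refine ⟨Walk.cons h Walk.nil, ?_⟩
  intro x hx hxs
  rw [support_cons] at hx
  rcases List.mem_cons.1 hx with rfl | hx
  · exact absurd hxs hu
  · simpa using hx

lemma reach_cons {s : Set (Fin n)} {u u' c : Fin n} (hu : u ∉ s)
    (h : (GD D hherm).Adj u u') (hr : Reach D hherm s u' c) : Reach D hherm s u c := by
  obtain ⟨w, hw⟩ := hr
  refine ⟨Walk.cons h w, ?_⟩
  intro x hx hxs
  rw [support_cons] at hx
  rcases List.mem_cons.1 hx with rfl | hx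
  · exact absurd hxs hu
  · exact hw x hx hxs

end NCAux3

section Bridge

lemma opNorm_def' {ι : Type*} [Finite ι] [inst1 : Fintype ι] [inst2 : DecidableEq ι]
    (M : Matrix ι ι ℂ) : opNorm M = ‖Matrix.toEuclideanCLM (𝕜 := ℂ) M‖ := by
  unfold opNorm
  rw [Subsingleton.elim (Fintype.ofFinite ι) inst1,
    Subsingleton.elim (Classical.decEq ι) inst2]

lemma commD_apply {ι : Type*} [Finite ι] (D : Matrix ι ι ℂ) (a : ι → ℂ) (u v : ι) :
    commD D a u v = D u v * (a v - a u) := by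
  unfold commD
  simp only [Matrix.sub_apply, Matrix.mul_diagonal, Matrix.diagonal_mul]
  ring

end Bridge

theorem stmt5 {n : ℕ} (D : Matrix (Fin n) (Fin n) ℂ)
    (hherm : D.IsHermitian) (hdiag : ∀ i, D i i = 0) (i j : Fin n)
    (hconn : Conn D i j) (hi : i ∈ simplePathSet D i j) (hj : j ∈ simplePathSet D i j) :
    ncDist D i j =
      ncDist (D.submatrix (Subtype.val : simplePathSet D i j → Fin n) Subtype.val)
        ⟨i, hi⟩ ⟨j, hj⟩ := by
  classical
  haveI : Fintype ↥(simplePathSet D i j) := Fintype.ofFinite _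
  set s := simplePathSet D i j with hsdef
  set D' := D.submatrix (Subtype.val : s → Fin n) Subtype.val with hD'def
  unfold ncDist
  refine le_antisymm ?_ ?_
  · refine iSup₂_le fun a ha => ?_
    refine le_iSup₂_of_le (fun k : s => a ↑k) ?_ le_rfl
    have hsub : commD D' (fun k : s => a ↑k)
        = (commD D a).submatrix (Subtype.val : s → Fin n) Subtype.val := by
      ext k l
      rw [Matrix.submatrix_apply, commD_apply, commD_apply, hD'def, Matrix.submatrix_apply]
    calc opNorm (commD D' (fun k : s => a ↑k))
        = ‖Matrix.toEuclideanCLM (𝕜 := ℂ)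
            ((commD D a).submatrix (Subtype.val : s → Fin n) Subtype.val)‖ := by
          rw [hsub, opNorm_def']
      _ ≤ ‖Matrix.toEuclideanCLM (𝕜 := ℂ) (commD D a)‖ := opnorm_submatrix_le s _
      _ = opNorm (commD D a) := (opNorm_def' _).symm
      _ ≤ 1 := ha
  · refine iSup₂_le fun a ha => ?_
    set ea : Fin n → ℂ := fun u =>
      if hu : u ∈ s then a ⟨u, hu⟩
      else if h : ∃ c, ∃ _ : c ∈ s, NCAux3.Reach D hherm s u c then
        a ⟨h.choose, h.choose_spec.choose⟩
      else 0 with headef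
    have hea_on : ∀ (u : Fin n) (hu : u ∈ s), ea u = a ⟨u, hu⟩ := by
      intro u hu
      rw [headef]
      exact dif_pos hu
    have hadj : ∀ u v : Fin n, (NCAux3.GD D hherm).Adj u v → (u ∉ s ∨ v ∉ s) → ea u = ea v := by
      intro u v hadj hors
      by_cases hu : u ∈ s
      · have hv : v ∉ s := hors.resolve_left (not_not_intro hu)
        have hr : NCAux3.Reach D hherm s v u := NCAux3.reach_single hv hadj.symm
        have hex : ∃ c, ∃ _ : c ∈ s, NCAux3.Reach D hherm s v c := ⟨u, hu, hr⟩
        have hkl : hex.choose = u :=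
          NCAux3.kl hex.choose_spec.choose hu hex.choose_spec.choose_spec hr
        rw [hea_on u hu]
        simp only [headef]
        rw [dif_neg hv, dif_pos hex]
        congr 1
        exact Subtype.ext hkl.symm
      · by_cases hv : v ∈ s
        · have hr : NCAux3.Reach D hherm s u v := NCAux3.reach_single hu hadj
          have hex : ∃ c, ∃ _ : c ∈ s, NCAux3.Reach D hherm s u c := ⟨v, hv, hr⟩
          have hkl : hex.choose = v :=
            NCAux3.kl hex.choose_spec.choose hv hex.choose_spec.choose_spec hr
          rw [hea_on v hv]
          simp only [headef]
          rw [dif_neg hu, dif_pos hex]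
          congr 1
          exact Subtype.ext hkl
        · by_cases he : ∃ c, ∃ _ : c ∈ s, NCAux3.Reach D hherm s u c
          · have he' : ∃ c, ∃ _ : c ∈ s, NCAux3.Reach D hherm s v c := by
              obtain ⟨c, hcs, hr⟩ := he
              exact ⟨c, hcs, NCAux3.reach_cons hv hadj.symm hr⟩
            have hru : NCAux3.Reach D hherm s u he'.choose :=
              NCAux3.reach_cons hu hadj he'.choose_spec.choose_spec
            have hkl : he.choose = he'.choose :=
              NCAux3.kl he.choose_spec.choose he'.choose_spec.choose
                he.choose_spec.choose_spec hru
            simp only [headef]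
            rw [dif_neg hu, dif_neg hv, dif_pos he, dif_pos he']
            congr 1
            exact Subtype.ext hkl
          · have he' : ¬∃ c, ∃ _ : c ∈ s, NCAux3.Reach D hherm s v c := by
              intro he'
              obtain ⟨c, hcs, hr⟩ := he'
              exact he ⟨c, hcs, NCAux3.reach_cons hu hadj hr⟩
            simp only [headef]
            rw [dif_neg hu, dif_neg hv, dif_neg he, dif_neg he']
    have hsupp : ∀ u v : Fin n, (u ∉ s ∨ v ∉ s) → commD D ea u v = 0 := by
      intro u v hors
      rw [commD_apply]
      by_cases huv : u = v
      · subst huv; rw [sub_self, mul_zero]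
      · by_cases hD : D u v = 0
        · rw [hD, zero_mul]
        · rw [hadj u v ⟨huv, hD⟩ hors, sub_self, mul_zero]
    have hsubmx : (commD D ea).submatrix (Subtype.val : s → Fin n) Subtype.val
        = commD D' a := by
      ext k l
      rw [Matrix.submatrix_apply, commD_apply, commD_apply, hD'def, Matrix.submatrix_apply,
        hea_on _ l.2, hea_on _ k.2]
    refine le_iSup₂_of_le ea ?_ ?_
    · calc opNorm (commD D ea)
          = ‖Matrix.toEuclideanCLM (𝕜 := ℂ) (commD D ea)‖ := opNorm_def' _
        _ ≤ ‖Matrix.toEuclideanCLM (𝕜 := ℂ)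
              ((commD D ea).submatrix (Subtype.val : s → Fin n) Subtype.val)‖ :=
            opnorm_le_submatrix s _ hsupp
        _ = opNorm (commD D' a) := by rw [hsubmx, opNorm_def']
        _ ≤ 1 := ha
    · have h1 : ea i = a ⟨i, hi⟩ := hea_on i hi
      have h2 : ea j = a ⟨j, hj⟩ := hea_on j hj
      rw [h1, h2]
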